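/- For R ∈ SO(3), unit vector n^f ∈ ℝ³, d^f ∈ ℝ, and p^r ∈ ℝ³ with d^f ≠ 0, define the plane-SLAM observation Jacobian H = Rᵀ[H₁, H₂, H₃] with H₁ = (d^f − (p^r)ᵀn^f)(n^f)^∧, H₂ = −n^f(n^f)ᵀ, H₃ = ((d^f − (p^r)ᵀn^f)I₃ − n^f(p^r)ᵀ + 2(n^f)ᵀp^r · n^f(n^f)ᵀ)/d^f. Then H annihilates the 9×6 matrix N = [[0, I₃], [I₃, −(p^r)^∧], [n^f(n^f)ᵀ, −d^f(n^f)^∧]], i.e. H·N = 0. -/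

import Mathlib

open Matrix

/-- The skew-symmetric (cross-product) matrix of v ∈ ℝ³. -/
def skew (v : Fin 3 → ℝ) : Matrix (Fin 3) (Fin 3) ℝ :=
  !![0, -v 2, v 1; v 2, 0, -v 0; -v 1, v 0, 0]

/-- The observation Jacobian H = Rᵀ[H₁, H₂, H₃] of plane-feature SLAM. -/
noncomputable def obsHplane (R : Matrix (Fin 3) (Fin 3) ℝ) (nf : Fin 3 → ℝ) (df : ℝ)
    (pr : Fin 3 → ℝ) : Matrix (Fin 3) (Fin 3 ⊕ (Fin 3 ⊕ Fin 3)) ℝ :=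
  Rᵀ * Matrix.fromCols ((df - pr ⬝ᵥ nf) • skew nf)
    (Matrix.fromCols (-(Matrix.vecMulVec nf nf))
      (df⁻¹ • ((df - pr ⬝ᵥ nf) • (1 : Matrix (Fin 3) (Fin 3) ℝ)
          - Matrix.vecMulVec nf pr
          + (2 * (nf ⬝ᵥ pr)) • Matrix.vecMulVec nf nf)))

/-- The unobservable-subspace basis of plane-feature SLAM in the standard atlas. -/
def unobsNplane (nf : Fin 3 → ℝ) (df : ℝ) (pr : Fin 3 → ℝ) :
    Matrix (Fin 3 ⊕ (Fin 3 ⊕ Fin 3)) (Fin 3 ⊕ Fin 3) ℝ :=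
  Matrix.fromBlocks 0 1
    (Matrix.fromRows 1 (Matrix.vecMulVec nf nf))
    (Matrix.fromRows (-(skew pr)) (-(df • skew nf)))

lemma vecMulVec_mul' (a b : Fin 3 → ℝ) (M : Matrix (Fin 3) (Fin 3) ℝ) :
    Matrix.vecMulVec a b * M = Matrix.vecMulVec a (b ᵥ* M) := by
  ext i j
  simp [Matrix.vecMulVec_apply, Matrix.mul_apply, Matrix.vecMul, dotProduct,
    Fin.sum_univ_three]
  ring

lemma skew_vecMul_self (v : Fin 3 → ℝ) : v ᵥ* skew v = 0 := by
  ext i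
  fin_cases i <;>
    simp [skew, Matrix.vecMul, dotProduct, Fin.sum_univ_three] <;> ring

lemma skew_vecMul_anti (a b : Fin 3 → ℝ) : a ᵥ* skew b = -(b ᵥ* skew a) := by
  ext i
  fin_cases i <;>
    simp [skew, Matrix.vecMul, dotProduct, Fin.sum_univ_three, Matrix.vecHead,
      Matrix.vecTail, Function.comp] <;> ring

lemma vecMulVec_zero' (a : Fin 3 → ℝ) : Matrix.vecMulVec a (0 : Fin 3 → ℝ) = 0 := by
  ext i j; simp [Matrix.vecMulVec_apply]

lemma vecMulVec_neg' (a b : Fin 3 → ℝ) : Matrix.vecMulVec a (-b) = -Matrix.vecMulVec a b := by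
  ext i j; simp [Matrix.vecMulVec_apply]

lemma vecMulVec_smul' (a : Fin 3 → ℝ) (r : ℝ) (b : Fin 3 → ℝ) :
    Matrix.vecMulVec a (r • b) = r • Matrix.vecMulVec a b := by
  ext i j; simp [Matrix.vecMulVec_apply]; ring

lemma vecMul_smulM (a : Fin 3 → ℝ) (r : ℝ) (M : Matrix (Fin 3) (Fin 3) ℝ) :
    a ᵥ* (r • M) = r • (a ᵥ* M) := by
  ext i; simp [Matrix.vecMul, dotProduct, Fin.sum_univ_three]; ring

lemma vecMul_vecMulVec' (a b c : Fin 3 → ℝ) :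
    a ᵥ* Matrix.vecMulVec b c = (a ⬝ᵥ b) • c := by
  ext i
  simp [Matrix.vecMulVec_apply, Matrix.vecMul, dotProduct, Fin.sum_univ_three]
  ring

/-- The plane-SLAM observation Jacobian annihilates the unobservable-subspace basis. -/
theorem obsHplane_mul_unobsNplane_eq_zero
    (R : Matrix (Fin 3) (Fin 3) ℝ)
    (hR : R ∈ Matrix.specialOrthogonalGroup (Fin 3) ℝ)
    (nf : Fin 3 → ℝ) (hn : nf ⬝ᵥ nf = 1)
    (df : ℝ) (hd : df ≠ 0) (pr : Fin 3 → ℝ) :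
    obsHplane R nf df pr * unobsNplane nf df pr = 0 := by
  have hpn : pr ⬝ᵥ nf = nf ⬝ᵥ pr := dotProduct_comm pr nf
  rw [obsHplane, unobsNplane, Matrix.mul_assoc]
  simp only [Matrix.fromCols_mul_fromBlocks, Matrix.fromCols_mul_fromRows,
    Matrix.mul_zero, Matrix.mul_one, Matrix.smul_mul, Matrix.add_mul, Matrix.sub_mul,
    Matrix.one_mul, Matrix.neg_mul, Matrix.mul_neg, vecMulVec_mul',
    vecMul_vecMulVec', skew_vecMul_self, hn, one_smul, skew_vecMul_anti nf pr,
    vecMulVec_zero', vecMulVec_neg', vecMulVec_smul', hpn, vecMul_smulM,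
    zero_add, smul_zero]
  have h0 : (0 : Matrix (Fin 3) (Fin 3 ⊕ Fin 3) ℝ) =
      Matrix.fromCols 0 0 := by
    rw [← Matrix.fromCols_zero]
  refine Eq.trans (congrArg (fun X => Rᵀ * X) ?_) (Matrix.mul_zero _)
  rw [h0, Matrix.fromCols_inj.eq_iff]
  constructor
  · match_scalars <;> field_simp <;> ring
  · match_scalars <;> field_simp <;> ring
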